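/- Every k-hypergraph (V,H) with 1 ≤ k < |V| is either separable or equatable, but not both. Here separable means there exists a labeling x : V → ℝ such that H = {E ⊆ V : |E| = k and ∑_{v∈E} x(v) ≥ 0}, and equatable means there exists a nonzero labeling y : (k-subsets of V) → ℝ≥0 such that for every v ∈ V, the sum of y(E) over edges E ∈ H containing v equals the sum of y(F) over non-edges F ∉ H (with |F| = k) containing v. -/

import Mathlib

open Finset

variable {V : Type*}

/-- A `k`-hypergraph `H` is separable if some vertex labeling `x : V → ℝ` has
`H` equal to the set of `k`-subsets with nonnegative label sum. -/
def SeparableHypergraph [Fintype V] [DecidableEq V] (k : ℕ) (H : Finset (Finset V)) : Prop :=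
  ∃ x : V → ℝ, ∀ E : Finset V, E ∈ H ↔ E.card = k ∧ 0 ≤ ∑ v ∈ E, x v

/-- A `k`-hypergraph `H` is equatable if some nonzero nonnegative labeling `y` of the
`k`-subsets of `V` has, for every vertex `v`, the sum of labels of edges containing `v`
equal to the sum of labels of non-edges containing `v`. -/
def EquatableHypergraph [Fintype V] [DecidableEq V] (k : ℕ) (H : Finset (Finset V)) : Prop :=
  ∃ y : Finset V → ℝ,
    (∀ G, 0 ≤ y G) ∧
    (∃ G ∈ (univ : Finset V).powersetCard k, y G ≠ 0) ∧
    ∀ v : V,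
      ∑ E ∈ ((univ : Finset V).powersetCard k).filter (fun E => v ∈ E ∧ E ∈ H), y E =
      ∑ F ∈ ((univ : Finset V).powersetCard k).filter (fun F => v ∈ F ∧ F ∉ H), y F

/-- A hypergraph is exchangeable if there are edges `E₁, E₂` and `v₁ ∈ E₁ \ E₂`,
`v₂ ∈ E₂ \ E₁` such that both sets obtained by exchanging `v₁` and `v₂` are non-edges. -/
def ExchangeableHypergraph [DecidableEq V] (H : Finset (Finset V)) : Prop :=
  ∃ E₁ ∈ H, ∃ E₂ ∈ H, ∃ v₁ ∈ E₁ \ E₂, ∃ v₂ ∈ E₂ \ E₁,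
    insert v₂ (E₁.erase v₁) ∉ H ∧ insert v₁ (E₂.erase v₂) ∉ H

noncomputable section AuxSep

/-- sign of a k-subset: +1 on edges, -1 on non-edges. -/
def hgSgn [DecidableEq V] (H : Finset (Finset V)) (G : Finset V) : ℝ :=
  if G ∈ H then 1 else -1

/-- signed characteristic vector. -/
def hgVec [DecidableEq V] (H : Finset (Finset V)) (G : Finset V) : V → ℝ :=
  fun v => hgSgn H G * (if v ∈ G then 1 else 0)

lemma hgSgn_ne_zero [DecidableEq V] (H : Finset (Finset V)) (G : Finset V) :
    hgSgn H G ≠ 0 := by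
  unfold hgSgn; split <;> norm_num

lemma hgVec_apply_ne_zero [DecidableEq V] (H : Finset (Finset V)) (G : Finset V) (v : V) :
    hgVec H G v ≠ 0 ↔ v ∈ G := by
  unfold hgVec
  by_cases h : v ∈ G <;> simp [h, hgSgn_ne_zero H G]

lemma hgVec_injOn [DecidableEq V] (H : Finset (Finset V)) :
    ∀ G G' : Finset V, hgVec H G = hgVec H G' → G = G' := by
  intro G G' h
  ext v
  rw [← hgVec_apply_ne_zero H G v, ← hgVec_apply_ne_zero H G' v, h]

lemma pointwise_split [DecidableEq V] (H : Finset (Finset V)) (y : Finset V → ℝ)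
    (c : ℝ) (G : Finset V) (v : V) :
    y G * (hgSgn H G * (if v ∈ G then c else 0)) =
      ((if v ∈ G ∧ G ∈ H then y G else 0) - (if v ∈ G ∧ G ∉ H then y G else 0)) * c := by
  unfold hgSgn
  by_cases h1 : v ∈ G <;> by_cases h2 : G ∈ H <;> simp [h1, h2] <;> ring

end AuxSep

section Main
variable [Fintype V] [DecidableEq V]

/-- From a separating labeling, build one with strict inequalities on all k-subsets. -/
lemma sep_strict {k : ℕ} {H : Finset (Finset V)} (hk : 1 ≤ k)
    (hs : SeparableHypergraph k H) :
    ∃ x : V → ℝ, ∀ G ∈ (univ : Finset V).powersetCard k, 0 < hgSgn H G * ∑ v ∈ G, x v := by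
  obtain ⟨x, hx⟩ := hs
  set N : Finset (Finset V) :=
    ((univ : Finset V).powersetCard k).filter (fun F => F ∉ H) with hN
  have hneg : ∀ F ∈ N, (∑ v ∈ F, x v) < 0 := by
    intro F hF
    rw [hN, mem_filter, mem_powersetCard_univ] at hF
    by_contra hc
    push_neg at hc
    exact hF.2 ((hx F).mpr ⟨hF.1, hc⟩)
  set S : Finset ℝ := insert (1 : ℝ) (N.image fun F => -(∑ v ∈ F, x v)) with hS
  have hSne : S.Nonempty := insert_nonempty _ _
  set m : ℝ := S.min' hSne with hm
  have hmpos : 0 < m := by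
    rw [hm, Finset.lt_min'_iff]
    intro a ha
    rw [hS, mem_insert] at ha
    rcases ha with rfl | ha
    · norm_num
    · obtain ⟨F, hF, rfl⟩ := mem_image.mp ha
      linarith [hneg F hF]
  have hkpos : (0 : ℝ) < (k : ℝ) := by exact_mod_cast hk
  set ε : ℝ := m / (2 * k) with hε
  have hεpos : 0 < ε := by positivity
  refine ⟨fun v => x v + ε, ?_⟩
  intro G hG
  rw [mem_powersetCard_univ] at hG
  have hsum : ∑ v ∈ G, (x v + ε) = (∑ v ∈ G, x v) + k * ε := by
    rw [Finset.sum_add_distrib, Finset.sum_const, hG, nsmul_eq_mul]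
  by_cases hGH : G ∈ H
  · have h0 : 0 ≤ ∑ v ∈ G, x v := ((hx G).mp hGH).2
    have : 0 < (k : ℝ) * ε := by positivity
    unfold hgSgn
    rw [if_pos hGH, hsum]
    nlinarith
  · have hGN : G ∈ N := by
      rw [hN, mem_filter, mem_powersetCard_univ]; exact ⟨hG, hGH⟩
    have hmle : m ≤ -(∑ v ∈ G, x v) :=
      Finset.min'_le _ _ (by rw [hS]; exact mem_insert_of_mem (mem_image_of_mem _ hGN))
    have hkε : (k : ℝ) * ε = m / 2 := by
      rw [hε]; field_simp
    unfold hgSgn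
    rw [if_neg hGH, hsum, hkε]
    nlinarith [hneg G hGN]

/-- A strict separating labeling gives separability. -/
lemma strict_sep {k : ℕ} {H : Finset (Finset V)} (hH : ∀ E ∈ H, E.card = k)
    (h : ∃ x : V → ℝ, ∀ G ∈ (univ : Finset V).powersetCard k, 0 < hgSgn H G * ∑ v ∈ G, x v) :
    SeparableHypergraph k H := by
  obtain ⟨x, hx⟩ := h
  refine ⟨x, fun E => ⟨fun hE => ?_, fun ⟨hcard, hsum⟩ => ?_⟩⟩
  · have hcard := hH E hE
    have := hx E (mem_powersetCard_univ.mpr hcard)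
    unfold hgSgn at this
    rw [if_pos hE] at this
    exact ⟨hcard, by linarith⟩
  · by_contra hE
    have := hx E (mem_powersetCard_univ.mpr hcard)
    unfold hgSgn at this
    rw [if_neg hE] at this
    linarith

end Main

section Main2
variable [Fintype V] [DecidableEq V]

lemma sep_or_eq {k : ℕ} {H : Finset (Finset V)} (hH : ∀ E ∈ H, E.card = k) :
    SeparableHypergraph k H ∨ EquatableHypergraph k H := by
  classical
  set P : Finset (Finset V) := (univ : Finset V).powersetCard k with hP
  set s : Finset (V → ℝ) := P.image (hgVec H) with hs
  by_cases h0 : (0 : V → ℝ) ∈ convexHull ℝ (s : Set (V → ℝ))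
  · right
    rw [Finset.convexHull_eq] at h0
    obtain ⟨w, hw0, hw1, hwc⟩ := h0
    rw [Finset.centerMass_eq_of_sum_1 _ _ hw1] at hwc
    have hcm : ∑ z ∈ s, w z • z = 0 := by simpa using hwc
    have hinj : ∀ a ∈ P, ∀ b ∈ P, hgVec H a = hgVec H b → a = b :=
      fun a _ b _ h => hgVec_injOn H a b h
    obtain ⟨y, hydef⟩ : ∃ y : Finset V → ℝ,
        ∀ G, y G = if G ∈ P then w (hgVec H G) else 0 := ⟨_, fun _ => rfl⟩
    have hyP : ∀ G ∈ P, y G = w (hgVec H G) := by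
      intro G hG; rw [hydef, if_pos hG]
    refine ⟨y, ?_, ?_, ?_⟩
    · intro G
      rw [hydef]
      split
      · exact hw0 _ (mem_image_of_mem _ ‹_›)
      · exact le_refl 0
    · have hsum : ∑ G ∈ P, y G = 1 := by
        rw [Finset.sum_congr rfl hyP]
        rw [← Finset.sum_image (g := hgVec H) (f := w) hinj]
        exact hw1
      obtain ⟨G, hG, hGne⟩ := Finset.exists_ne_zero_of_sum_ne_zero
        (by rw [hsum]; exact one_ne_zero)
      exact ⟨G, hG, hGne⟩
    · intro v
      have h1 : ∑ G ∈ P, y G • hgVec H G = 0 := by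
        rw [Finset.sum_congr rfl (fun G hG => by rw [hyP G hG])]
        rw [← Finset.sum_image (g := hgVec H) (f := fun z : V → ℝ => w z • z) hinj]
        exact hcm
      have h2 := congrFun h1 v
      rw [Finset.sum_apply] at h2
      simp only [Pi.smul_apply, smul_eq_mul, Pi.zero_apply] at h2
      have h3 : ∑ G ∈ P,
          ((if v ∈ G ∧ G ∈ H then y G else 0) - (if v ∈ G ∧ G ∉ H then y G else 0)) = 0 := by
        refine Eq.trans (Finset.sum_congr rfl fun G hG => ?_) h2
        have hps := pointwise_split H y (1 : ℝ) G v
        rw [mul_one] at hps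
        exact hps.symm
      rw [Finset.sum_sub_distrib, sub_eq_zero] at h3
      rw [← Finset.sum_filter, ← Finset.sum_filter] at h3
      exact h3
  · left
    apply strict_sep hH
    have hcl : IsClosed (convexHull ℝ (s : Set (V → ℝ))) := s.finite_toSet.isClosed_convexHull ℝ
    obtain ⟨f, u, hfu, hub⟩ :=
      geometric_hahn_banach_point_closed (convex_convexHull ℝ _) hcl h0
    have hu : (0 : ℝ) < u := by simpa using hfu
    refine ⟨fun v => f (fun j => if v = j then 1 else 0), ?_⟩
    intro G hG
    have hmem : hgVec H G ∈ convexHull ℝ (s : Set (V → ℝ)) :=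
      subset_convexHull ℝ _ (by exact_mod_cast mem_image_of_mem _ hG)
    have hpos : 0 < f (hgVec H G) := lt_trans hu (hub _ hmem)
    have hdecomp : f (hgVec H G)
        = ∑ i, hgVec H G i * f (fun j => if i = j then 1 else 0) := by
      conv_lhs => rw [pi_eq_sum_univ (hgVec H G)]
      rw [map_sum]
      simp [smul_eq_mul]
    have hcalc : ∑ i, hgVec H G i * f (fun j => if i = j then 1 else 0)
        = hgSgn H G * ∑ v ∈ G, f (fun j => if v = j then 1 else 0) := by
      unfold hgVec
      calc ∑ i, (hgSgn H G * if i ∈ G then 1 else 0) * f (fun j => if i = j then 1 else 0)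
          = ∑ i ∈ G, (hgSgn H G * if i ∈ G then 1 else 0) * f (fun j => if i = j then 1 else 0) :=
            (Finset.sum_subset (subset_univ G) (fun i _ hiG => by simp [hiG])).symm
        _ = ∑ i ∈ G, hgSgn H G * f (fun j => if i = j then 1 else 0) :=
            Finset.sum_congr rfl fun i hi => by rw [if_pos hi, mul_one]
        _ = hgSgn H G * ∑ v ∈ G, f (fun j => if v = j then 1 else 0) :=
            (Finset.mul_sum _ _ _).symm
    rw [hdecomp, hcalc] at hpos
    exact hpos

lemma not_both {k : ℕ} {H : Finset (Finset V)} (hk : 1 ≤ k)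
    (hs : SeparableHypergraph k H) (he : EquatableHypergraph k H) : False := by
  classical
  obtain ⟨x, hx⟩ := sep_strict hk hs
  obtain ⟨y, hy0, ⟨G₀, hG₀, hG₀ne⟩, heq⟩ := he
  set P : Finset (Finset V) := (univ : Finset V).powersetCard k with hP
  have hpos : 0 < ∑ G ∈ P, y G * (hgSgn H G * ∑ v ∈ G, x v) := by
    apply Finset.sum_pos'
    · intro G hG; exact mul_nonneg (hy0 G) (le_of_lt (hx G hG))
    · exact ⟨G₀, hG₀, mul_pos ((hy0 G₀).lt_of_ne (Ne.symm hG₀ne)) (hx G₀ hG₀)⟩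
  have hzero : ∑ G ∈ P, y G * (hgSgn H G * ∑ v ∈ G, x v) = 0 := by
    have step1 : ∀ G : Finset V, ∑ v ∈ G, x v = ∑ v : V, if v ∈ G then x v else 0 := by
      intro G; rw [Finset.sum_ite_mem, univ_inter]
    calc ∑ G ∈ P, y G * (hgSgn H G * ∑ v ∈ G, x v)
        = ∑ G ∈ P, ∑ v : V, y G * (hgSgn H G * if v ∈ G then x v else 0) := by
          refine Finset.sum_congr rfl fun G _ => ?_
          rw [step1 G, Finset.mul_sum, Finset.mul_sum]
      _ = ∑ v : V, ∑ G ∈ P, y G * (hgSgn H G * if v ∈ G then x v else 0) :=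
          Finset.sum_comm
      _ = ∑ v : V, ((∑ E ∈ P.filter (fun E => v ∈ E ∧ E ∈ H), y E)
            - (∑ F ∈ P.filter (fun F => v ∈ F ∧ F ∉ H), y F)) * x v := by
          refine Finset.sum_congr rfl fun v _ => ?_
          rw [Finset.sum_congr rfl (fun G _ => pointwise_split H y (x v) G v)]
          rw [← Finset.sum_mul, Finset.sum_sub_distrib,
            ← Finset.sum_filter, ← Finset.sum_filter]
      _ = 0 := by
          refine Finset.sum_eq_zero fun v _ => ?_
          rw [heq v, sub_self, zero_mul]
  linarith

end Main2

/-- Every k-hypergraph is either separable or equatable, but not both. -/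
theorem separable_xor_equatable [Fintype V] [DecidableEq V] (k : ℕ) (H : Finset (Finset V))
    (hk : 1 ≤ k) (hkn : k < Fintype.card V) (hH : ∀ E ∈ H, E.card = k) :
    Xor' (SeparableHypergraph k H) (EquatableHypergraph k H) := by
  rcases sep_or_eq hH with hs | he
  · exact Or.inl ⟨hs, fun he => not_both hk hs he⟩
  · exact Or.inr ⟨he, fun hs => not_both hk hs he⟩
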